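/- If B is an invertible d×d rational matrix that is not an integer matrix, then the commutator subgroup [G,G] of the time-frequency group G = ⟨T_k, M_l : k ∈ ℤ^d, l ∈ Bℤ^d⟩ is a nontrivial finite cyclic group; in fact, letting m be the least common multiple of the denominators of the entries of B in lowest terms, [G,G] is contained in the group of m-th roots of unity. -/

import Mathlib

noncomputable section

open Complex

/-- The real dot product on `Fin d → ℝ`. -/
def dotR {d : ℕ} (a b : Fin d → ℝ) : ℝ := ∑ i, a i * b i

/-- `e2pi t = exp (2 π i t)`. -/
def e2pi (t : ℝ) : ℂ := Complex.exp (2 * Real.pi * Complex.I * t)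

lemma e2pi_add (s t : ℝ) : e2pi (s + t) = e2pi s * e2pi t := by
  rw [e2pi, e2pi, e2pi, ← Complex.exp_add]
  congr 1
  push_cast
  ring

lemma e2pi_zero : e2pi 0 = 1 := by simp [e2pi]

lemma e2pi_neg_mul (t : ℝ) : e2pi (-t) * e2pi t = 1 := by
  rw [← e2pi_add, neg_add_cancel, e2pi_zero]

/-- Translation operator `T_k f (x) = f (x - k)`, as a bijection of functions. -/
def Tr {d : ℕ} (k : Fin d → ℝ) : Equiv.Perm ((Fin d → ℝ) → ℂ) where
  toFun f := fun x => f (x - k)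
  invFun f := fun x => f (x + k)
  left_inv f := by funext x; simp
  right_inv f := by funext x; simp

/-- Modulation operator `M_l f (x) = e^{2πi⟨l,x⟩} f (x)`. -/
def Mo {d : ℕ} (l : Fin d → ℝ) : Equiv.Perm ((Fin d → ℝ) → ℂ) where
  toFun f := fun x => e2pi (dotR l x) * f x
  invFun f := fun x => e2pi (-(dotR l x)) * f x
  left_inv f := by
    funext x; dsimp; rw [← mul_assoc, e2pi_neg_mul, one_mul]
  right_inv f := by
    funext x; dsimp
    rw [← mul_assoc, mul_comm (e2pi (dotR l x)), e2pi_neg_mul, one_mul]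

/-- Scalar operator: multiplication by the unimodular constant `e^{2πiθ}`. -/
def Sc {d : ℕ} (θ : ℝ) : Equiv.Perm ((Fin d → ℝ) → ℂ) where
  toFun f := fun x => e2pi θ * f x
  invFun f := fun x => e2pi (-θ) * f x
  left_inv f := by
    funext x; dsimp; rw [← mul_assoc, e2pi_neg_mul, one_mul]
  right_inv f := by
    funext x; dsimp
    rw [← mul_assoc, mul_comm (e2pi θ), e2pi_neg_mul, one_mul]

/-- The time–frequency group `G = ⟨T_k, M_l : k ∈ ℤ^d, l ∈ Bℤ^d⟩`. -/
def TFGroup {d : ℕ} (B : Matrix (Fin d) (Fin d) ℝ) :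
    Subgroup (Equiv.Perm ((Fin d → ℝ) → ℂ)) :=
  Subgroup.closure
    ({g | ∃ k : Fin d → ℤ, g = Tr (fun i => (k i : ℝ))} ∪
     {g | ∃ z : Fin d → ℤ, g = Mo (B.mulVec (fun i => (z i : ℝ)))})

open scoped commutatorElement

section Aux

variable {d : ℕ}

lemma Tr_app (k : Fin d → ℝ) (f : (Fin d → ℝ) → ℂ) (x : Fin d → ℝ) :
    Tr k f x = f (x - k) := rfl

lemma Mo_app (l : Fin d → ℝ) (f : (Fin d → ℝ) → ℂ) (x : Fin d → ℝ) :
    Mo l f x = e2pi (dotR l x) * f x := rfl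

lemma Sc_app (θ : ℝ) (f : (Fin d → ℝ) → ℂ) (x : Fin d → ℝ) :
    Sc θ f x = e2pi θ * f x := rfl

lemma dotR_add_left (a b c : Fin d → ℝ) : dotR (a + b) c = dotR a c + dotR b c := by
  simp [dotR, add_mul, Finset.sum_add_distrib]

lemma dotR_add_right (a b c : Fin d → ℝ) : dotR a (b + c) = dotR a b + dotR a c := by
  simp [dotR, mul_add, Finset.sum_add_distrib]

lemma dotR_sub_right (a b c : Fin d → ℝ) : dotR a (b - c) = dotR a b - dotR a c := by
  simp [dotR, mul_sub, Finset.sum_sub_distrib]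

lemma dotR_neg_right (a b : Fin d → ℝ) : dotR a (-b) = - dotR a b := by
  simp [dotR]

lemma dotR_zero_left (b : Fin d → ℝ) : dotR 0 b = 0 := by simp [dotR]

lemma e2pi_int (n : ℤ) : e2pi (n : ℝ) = 1 := by
  rw [e2pi, ← Complex.exp_int_mul_two_pi_mul_I n]
  congr 1
  push_cast
  ring

lemma Sc_mul (a b : ℝ) : Sc (d := d) a * Sc b = Sc (a + b) := by
  apply Equiv.ext; intro f; funext x
  simp only [Equiv.Perm.mul_apply, Sc_app, e2pi_add, mul_assoc]

lemma Sc_zero : Sc (d := d) 0 = 1 := by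
  apply Equiv.ext; intro f; funext x
  simp [Sc_app, e2pi_zero]

lemma Sc_inv (a : ℝ) : (Sc (d := d) a)⁻¹ = Sc (-a) := by
  apply inv_eq_of_mul_eq_one_right
  rw [Sc_mul, add_neg_cancel, Sc_zero]

lemma Tr_zero : Tr (0 : Fin d → ℝ) = 1 := by
  apply Equiv.ext; intro f; funext x
  simp [Tr_app]

lemma Mo_zero : Mo (0 : Fin d → ℝ) = 1 := by
  apply Equiv.ext; intro f; funext x
  simp [Mo_app, dotR_zero_left, e2pi_zero]

lemma Sc_pow (a : ℝ) (n : ℕ) : Sc (d := d) a ^ n = Sc (n * a) := by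
  induction n with
  | zero => simp [Sc_zero]
  | succ n ih =>
      rw [pow_succ, ih, Sc_mul]
      congr 1
      push_cast
      ring

lemma Sc_zpow (a : ℝ) (n : ℤ) : Sc (d := d) a ^ n = Sc (n * a) := by
  cases n with
  | ofNat n => rw [Int.ofNat_eq_coe, zpow_natCast, Sc_pow]; norm_num
  | negSucc n =>
      rw [zpow_negSucc, Sc_pow, Sc_inv]
      congr 1
      push_cast
      ring

lemma e2pi_merge2 (s t : ℝ) (z : ℂ) : e2pi s * (e2pi t * z) = e2pi (s + t) * z := by
  rw [e2pi_add]; ring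

lemma e2pi_merge4 (s t u v : ℝ) (z : ℂ) :
    e2pi s * (e2pi t * (e2pi u * (e2pi v * z))) = e2pi (s + t + u + v) * z := by
  rw [e2pi_add, e2pi_add, e2pi_add]; ring

lemma STM_mul (θ₁ θ₂ : ℝ) (k₁ k₂ l₁ l₂ : Fin d → ℝ) :
    (Sc θ₁ * Tr k₁ * Mo l₁) * (Sc θ₂ * Tr k₂ * Mo l₂)
      = Sc (θ₁ + θ₂ + dotR l₁ k₂) * Tr (k₁ + k₂) * Mo (l₁ + l₂) := by
  apply Equiv.ext; intro f; funext x
  simp only [Equiv.Perm.mul_apply, Sc_app, Tr_app, Mo_app]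
  rw [e2pi_merge4, e2pi_merge2, sub_sub]
  congr 2
  simp only [dotR_add_left, dotR_add_right, dotR_sub_right]
  ring

lemma Tr_Mo_comm (k l : Fin d → ℝ) :
    Tr k * Mo l = Sc (-(dotR l k)) * (Mo l * Tr k) := by
  apply Equiv.ext; intro f; funext x
  simp only [Equiv.Perm.mul_apply, Sc_app, Tr_app, Mo_app]
  rw [e2pi_merge2]
  congr 2
  simp only [dotR_sub_right]
  ring

lemma comm_Tr_Mo (k l : Fin d → ℝ) : ⁅Tr k, Mo l⁆ = Sc (-(dotR l k)) := by
  rw [commutatorElement_def, Tr_Mo_comm]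
  group

lemma STM_inv (θ : ℝ) (k l : Fin d → ℝ) :
    (Sc θ * Tr k * Mo l)⁻¹ = Sc (-θ + dotR l k) * Tr (-k) * Mo (-l) := by
  apply inv_eq_of_mul_eq_one_right
  rw [STM_mul]
  have h1 : θ + (-θ + dotR l k) + dotR l (-k) = 0 := by
    rw [dotR_neg_right]; ring
  rw [h1, add_neg_cancel, add_neg_cancel, Sc_zero, Tr_zero, Mo_zero]
  simp

lemma Sc_ne_one {c : ℝ} (hc : ∀ n : ℤ, c ≠ n) : Sc (d := d) c ≠ 1 := by
  intro h
  have h1 := congrFun (DFunLike.congr_fun h (fun _ => (1 : ℂ))) (fun _ => (0 : ℝ))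
  simp only [Sc_app, Equiv.Perm.coe_one, id_eq, mul_one] at h1
  rw [e2pi, Complex.exp_eq_one_iff] at h1
  obtain ⟨n, hn⟩ := h1
  have h2πI : (2 * (Real.pi : ℂ) * Complex.I) ≠ 0 := by
    simp [Real.pi_ne_zero, Complex.I_ne_zero]
  have : (c : ℂ) = (n : ℂ) := by
    apply mul_left_cancel₀ h2πI
    rw [hn]; ring
  exact hc n (by exact_mod_cast this)

lemma Sc_eq_one (n : ℤ) : Sc (d := d) ((n : ℝ)) = 1 := by
  apply Equiv.ext; intro f; funext x
  simp [Sc_app, e2pi_int]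

lemma rat_mul_int (q : ℚ) (m : ℕ) (h : q.den ∣ m) : ∃ t : ℤ, (m : ℚ) * q = (t : ℚ) := by
  obtain ⟨c, hc⟩ := h
  refine ⟨q.num * c, ?_⟩
  subst hc
  push_cast
  rw [show ((q.den : ℚ)) * (c : ℚ) * q = (q * (q.den : ℚ)) * c by ring, Rat.mul_den_eq_num]

lemma dot_int {d : ℕ} (B : Matrix (Fin d) (Fin d) ℚ) (m : ℕ)
    (hden : ∀ i j, (B i j).den ∣ m) (z k : Fin d → ℤ) :
    ∃ t : ℤ, (m : ℝ) * dotR ((B.map Rat.cast).mulVec (fun i => (z i : ℝ)))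
      (fun i => (k i : ℝ)) = (t : ℝ) := by
  choose T hT using fun i j => rat_mul_int (B i j) m (hden i j)
  have hT' : ∀ i j, (m : ℝ) * ((B i j : ℚ) : ℝ) = ((T i j : ℤ) : ℝ) := by
    intro i j
    exact_mod_cast congrArg (fun q : ℚ => (q : ℝ)) (hT i j)
  refine ⟨∑ i, (∑ j, T i j * z j) * k i, ?_⟩
  have expand : dotR ((B.map Rat.cast).mulVec (fun i => (z i : ℝ))) (fun i => (k i : ℝ))
      = ∑ i, (∑ j, ((B i j : ℚ) : ℝ) * (z j : ℝ)) * (k i : ℝ) := by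
    simp [dotR, Matrix.mulVec, dotProduct, Matrix.map_apply]
  rw [expand]
  push_cast
  simp only [← hT', Finset.mul_sum, Finset.sum_mul]
  refine Finset.sum_congr rfl fun i _ => ?_
  refine Finset.sum_congr rfl fun j _ => ?_
  ring

def Hsub {d : ℕ} (B : Matrix (Fin d) (Fin d) ℚ) (m : ℕ) (hm : (m : ℝ) ≠ 0)
    (hden : ∀ i j, (B i j).den ∣ m) : Subgroup (Equiv.Perm ((Fin d → ℝ) → ℂ)) where
  carrier := {g | ∃ (n : ℤ) (k z : Fin d → ℤ),
    g = Sc ((n : ℝ) / m) * Tr (fun i => (k i : ℝ))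
        * Mo ((B.map Rat.cast).mulVec (fun i => (z i : ℝ)))}
  one_mem' := by
    refine ⟨0, 0, 0, ?_⟩
    have h0 : (fun i => (((0 : Fin d → ℤ)) i : ℝ)) = (0 : Fin d → ℝ) := by
      funext i; simp
    rw [h0, Matrix.mulVec_zero, Tr_zero, Mo_zero]
    norm_num [Sc_zero]
  mul_mem' := by
    rintro a b ⟨n₁, k₁, z₁, rfl⟩ ⟨n₂, k₂, z₂, rfl⟩
    obtain ⟨t, ht⟩ := dot_int B m hden z₁ k₂
    refine ⟨n₁ + n₂ + t, k₁ + k₂, z₁ + z₂, ?_⟩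
    rw [STM_mul]
    have hD : dotR ((B.map Rat.cast).mulVec (fun i => (z₁ i : ℝ))) (fun i => (k₂ i : ℝ))
        = (t : ℝ) / m := by
      rw [eq_div_iff hm, mul_comm]; exact ht
    have e1 : (n₁ : ℝ) / m + (n₂ : ℝ) / m
        + dotR ((B.map Rat.cast).mulVec (fun i => (z₁ i : ℝ))) (fun i => (k₂ i : ℝ))
        = ((n₁ + n₂ + t : ℤ) : ℝ) / m := by
      rw [hD]; push_cast; ring
    have e2 : ((fun i => (k₁ i : ℝ)) + fun i => (k₂ i : ℝ))
        = (fun i => (((k₁ + k₂) : Fin d → ℤ) i : ℝ)) := by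
      funext i; simp
    have e3 : (B.map Rat.cast).mulVec (fun i => (z₁ i : ℝ))
          + (B.map Rat.cast).mulVec (fun i => (z₂ i : ℝ))
        = (B.map Rat.cast).mulVec (fun i => (((z₁ + z₂) : Fin d → ℤ) i : ℝ)) := by
      have hv : (fun i => (((z₁ + z₂) : Fin d → ℤ) i : ℝ))
          = (fun i => (z₁ i : ℝ)) + fun i => (z₂ i : ℝ) := by funext i; simp
      rw [hv, Matrix.mulVec_add]
    rw [e1, e2, e3]
  inv_mem' := by
    rintro a ⟨n, k, z, rfl⟩
    obtain ⟨t, ht⟩ := dot_int B m hden z k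
    refine ⟨-n + t, -k, -z, ?_⟩
    rw [STM_inv]
    have hD : dotR ((B.map Rat.cast).mulVec (fun i => (z i : ℝ))) (fun i => (k i : ℝ))
        = (t : ℝ) / m := by
      rw [eq_div_iff hm, mul_comm]; exact ht
    have e1 : -((n : ℝ) / m)
        + dotR ((B.map Rat.cast).mulVec (fun i => (z i : ℝ))) (fun i => (k i : ℝ))
        = ((-n + t : ℤ) : ℝ) / m := by
      rw [hD]; push_cast; ring
    have e2 : (-fun i => (k i : ℝ)) = (fun i => (((-k) : Fin d → ℤ) i : ℝ)) := by
      funext i; simp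
    have e3 : -(B.map Rat.cast).mulVec (fun i => (z i : ℝ))
        = (B.map Rat.cast).mulVec (fun i => (((-z) : Fin d → ℤ) i : ℝ)) := by
      have hv : (fun i => (((-z) : Fin d → ℤ) i : ℝ))
          = -fun i => (z i : ℝ) := by funext i; simp
      rw [hv, Matrix.mulVec_neg]
    rw [e1, e2, e3]

lemma TF_le_Hsub {d : ℕ} (B : Matrix (Fin d) (Fin d) ℚ) (m : ℕ) (hm : (m : ℝ) ≠ 0)
    (hden : ∀ i j, (B i j).den ∣ m) :
    TFGroup (B.map Rat.cast) ≤ Hsub B m hm hden := by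
  rw [TFGroup, Subgroup.closure_le]
  rintro g (⟨k, rfl⟩ | ⟨z, rfl⟩)
  · refine ⟨0, k, 0, ?_⟩
    have h0 : (fun i => (((0 : Fin d → ℤ)) i : ℝ)) = (0 : Fin d → ℝ) := by
      funext i; simp
    rw [h0, Matrix.mulVec_zero, Mo_zero, Int.cast_zero, zero_div, Sc_zero, one_mul, mul_one]
  · refine ⟨0, 0, z, ?_⟩
    have h0 : (fun i => (((0 : Fin d → ℤ)) i : ℝ)) = (0 : Fin d → ℝ) := by
      funext i; simp
    rw [h0, Tr_zero, Int.cast_zero, zero_div, Sc_zero, one_mul, one_mul]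

lemma comm_scalar {d : ℕ} (B : Matrix (Fin d) (Fin d) ℚ) (m : ℕ) (hm : (m : ℝ) ≠ 0)
    (hden : ∀ i j, (B i j).den ∣ m) {g h : Equiv.Perm ((Fin d → ℝ) → ℂ)}
    (hg : g ∈ Hsub B m hm hden) (hh : h ∈ Hsub B m hm hden) :
    ∃ t : ℤ, ⁅g, h⁆ = Sc ((t : ℝ) / m) := by
  obtain ⟨n₁, k₁, z₁, rfl⟩ := hg
  obtain ⟨n₂, k₂, z₂, rfl⟩ := hh
  obtain ⟨t₁₂, ht₁₂⟩ := dot_int B m hden z₁ k₂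
  obtain ⟨t₂₁, ht₂₁⟩ := dot_int B m hden z₂ k₁
  refine ⟨t₁₂ - t₂₁, ?_⟩
  set K₁ : Fin d → ℝ := fun i => (k₁ i : ℝ) with hK₁
  set K₂ : Fin d → ℝ := fun i => (k₂ i : ℝ) with hK₂
  set L₁ : Fin d → ℝ := (B.map Rat.cast).mulVec (fun i => (z₁ i : ℝ)) with hL₁
  set L₂ : Fin d → ℝ := (B.map Rat.cast).mulVec (fun i => (z₂ i : ℝ)) with hL₂
  have d12 : dotR L₁ K₂ = (t₁₂ : ℝ) / m := by rw [eq_div_iff hm, mul_comm]; exact ht₁₂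
  have d21 : dotR L₂ K₁ = (t₂₁ : ℝ) / m := by rw [eq_div_iff hm, mul_comm]; exact ht₂₁
  have h1 := STM_mul ((n₁ : ℝ) / m) ((n₂ : ℝ) / m) K₁ K₂ L₁ L₂
  have h2 := STM_mul ((n₂ : ℝ) / m) ((n₁ : ℝ) / m) K₂ K₁ L₂ L₁
  rw [add_comm K₂ K₁, add_comm L₂ L₁] at h2
  have hc : ⁅Sc ((n₁ : ℝ) / m) * Tr K₁ * Mo L₁, Sc ((n₂ : ℝ) / m) * Tr K₂ * Mo L₂⁆
      = ((Sc ((n₁ : ℝ) / m) * Tr K₁ * Mo L₁) * (Sc ((n₂ : ℝ) / m) * Tr K₂ * Mo L₂))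
        * ((Sc ((n₂ : ℝ) / m) * Tr K₂ * Mo L₂) * (Sc ((n₁ : ℝ) / m) * Tr K₁ * Mo L₁))⁻¹ := by
    rw [commutatorElement_def]
    group
  rw [hc, h1, h2]
  have hab : Sc (d := d) ((n₁ : ℝ) / m + (n₂ : ℝ) / m + dotR L₁ K₂)
      = Sc (((t₁₂ - t₂₁ : ℤ) : ℝ) / m) * Sc ((n₂ : ℝ) / m + (n₁ : ℝ) / m + dotR L₂ K₁) := by
    rw [Sc_mul]
    congr 1
    rw [d12, d21]
    push_cast
    ring
  rw [hab]
  group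

end Aux

/-- If `B` is an invertible rational matrix which is not an integer matrix,
then the commutator subgroup `[G,G]` of the time–frequency group
`G = ⟨T_k, M_l : k ∈ ℤ^d, l ∈ Bℤ^d⟩` is a nontrivial finite cyclic group, and with `m` the
least common multiple of the denominators of the entries of `B`, every element of `[G,G]`
has order dividing `m` (i.e. `[G,G]` is contained in the `m`-th roots of unity). -/
theorem stmt2 {d : ℕ} (B : Matrix (Fin d) (Fin d) ℚ) (hB : IsUnit B.det)
    (hBnotInt : ¬ ∀ i j, (B i j).den = 1)
    (m : ℕ) (hm : m = (Finset.univ : Finset ((Fin d) × (Fin d))).lcm (fun p => (B p.1 p.2).den)) :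
    ⁅TFGroup (B.map (Rat.cast : ℚ → ℝ)), TFGroup (B.map (Rat.cast : ℚ → ℝ))⁆ ≠ ⊥ ∧
    Finite ↥⁅TFGroup (B.map (Rat.cast : ℚ → ℝ)), TFGroup (B.map (Rat.cast : ℚ → ℝ))⁆ ∧
    IsCyclic ↥⁅TFGroup (B.map (Rat.cast : ℚ → ℝ)), TFGroup (B.map (Rat.cast : ℚ → ℝ))⁆ ∧
    ∀ g ∈ ⁅TFGroup (B.map (Rat.cast : ℚ → ℝ)), TFGroup (B.map (Rat.cast : ℚ → ℝ))⁆,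
      g ^ m = 1 := by
  have hm0 : m ≠ 0 := by
    rw [hm]
    intro h
    rw [Finset.lcm_eq_zero_iff] at h
    obtain ⟨p, _, hp⟩ := h
    exact (B p.1 p.2).den_nz hp
  have hmR : (m : ℝ) ≠ 0 := Nat.cast_ne_zero.mpr hm0
  have hden : ∀ i j, (B i j).den ∣ m := by
    intro i j
    rw [hm]
    exact Finset.dvd_lcm (Finset.mem_univ (i, j))
  set G := TFGroup (B.map (Rat.cast : ℚ → ℝ)) with hG
  have hGH := TF_le_Hsub B m hmR hden
  -- the cyclic group of scalars
  set g₀ : Equiv.Perm ((Fin d → ℝ) → ℂ) := Sc ((1 : ℝ) / m) with hg₀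
  set K := Subgroup.zpowers g₀ with hK
  have hord : g₀ ^ m = 1 := by
    rw [hg₀, Sc_pow, mul_one_div, div_self hmR]
    exact_mod_cast Sc_eq_one (d := d) 1
  have hle : ⁅G, G⁆ ≤ K := by
    rw [Subgroup.commutator_le]
    intro a ha b hb
    obtain ⟨t, htc⟩ := comm_scalar B m hmR hden (hGH ha) (hGH hb)
    rw [htc]
    refine Subgroup.mem_zpowers_iff.mpr ⟨t, ?_⟩
    rw [hg₀, Sc_zpow]
    congr 1
    ring
  have hKfin : Finite ↥K := by
    have : IsOfFinOrder g₀ := isOfFinOrder_iff_pow_eq_one.mpr ⟨m, Nat.pos_of_ne_zero hm0, hord⟩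
    exact this.finite_zpowers
  have hKcyc : IsCyclic ↥K := by
    refine ⟨⟨g₀, Subgroup.mem_zpowers g₀⟩, fun x => ?_⟩
    obtain ⟨n, hn⟩ := Subgroup.mem_zpowers_iff.mp x.2
    exact Subgroup.mem_zpowers_iff.mpr ⟨n, Subtype.ext (by rw [Subgroup.coe_zpow]; exact hn)⟩
  refine ⟨?_, ?_, ?_, ?_⟩
  · -- nontrivial
    push_neg at hBnotInt
    obtain ⟨i, j, hij⟩ := hBnotInt
    set k0 : Fin d → ℤ := fun i' => if i' = i then 1 else 0 with hk0
    set z0 : Fin d → ℤ := fun j' => if j' = j then 1 else 0 with hz0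
    have hTrmem : Tr (fun i' => (k0 i' : ℝ)) ∈ G := by
      exact Subgroup.subset_closure (Or.inl ⟨k0, rfl⟩)
    have hMomem : Mo ((B.map Rat.cast).mulVec (fun j' => (z0 j' : ℝ))) ∈ G := by
      exact Subgroup.subset_closure (Or.inr ⟨z0, rfl⟩)
    have hcm : ⁅Tr (fun i' => (k0 i' : ℝ)), Mo ((B.map Rat.cast).mulVec (fun j' => (z0 j' : ℝ)))⁆
        ∈ ⁅G, G⁆ := Subgroup.commutator_mem_commutator hTrmem hMomem
    have hval : dotR ((B.map Rat.cast).mulVec (fun j' => (z0 j' : ℝ)))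
        (fun i' => (k0 i' : ℝ)) = ((B i j : ℚ) : ℝ) := by
      simp [dotR, Matrix.mulVec, dotProduct, Matrix.map_apply, hk0, hz0,
        mul_ite, ite_mul, mul_one, mul_zero, one_mul, zero_mul, Finset.sum_ite_eq']
    intro hbot
    rw [hbot, Subgroup.mem_bot, comm_Tr_Mo, hval] at hcm
    refine Sc_ne_one (c := -((B i j : ℚ) : ℝ)) ?_ hcm
    intro n hn
    apply hij
    have : (B i j : ℚ) = ((-n : ℤ) : ℚ) := by
      have : ((B i j : ℚ) : ℝ) = (((-n : ℤ) : ℚ) : ℝ) := by push_cast; linarith [hn]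
      exact_mod_cast this
    rw [this, Rat.den_intCast]
  · -- finite
    exact Finite.of_injective (Subgroup.inclusion hle) (Subgroup.inclusion_injective hle)
  · -- cyclic
    have : IsCyclic ↥(Subgroup.subgroupOf ⁅G, G⁆ K) := Subgroup.isCyclic _
    exact isCyclic_of_surjective (Subgroup.subgroupOfEquivOfLe hle).toMonoidHom
      (Subgroup.subgroupOfEquivOfLe hle).surjective
  · -- exponent divides m
    intro g hg
    obtain ⟨n, hn⟩ := Subgroup.mem_zpowers_iff.mp (hle hg)
    rw [← hn, ← zpow_natCast, ← zpow_mul, mul_comm, zpow_mul, zpow_natCast, hord, one_zpow]
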